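/- Cut-elimination holds for LJ: if a sequent Δ ⊢ Γ (with |Γ| ≤ 1) has a formal proof in the intuitionistic sequent calculus LJ, then it has a proof in LJ that contains no application of the Cut rule. -/

import Mathlib

set_option autoImplicit true

/-- Formulas of intuitionistic propositional logic IL. -/
inductive ILF : Type
  | var : ℕ → ILF
  | top : ILF
  | ff : ILF
  | and : ILF → ILF → ILF
  | or : ILF → ILF → ILF
  | imp : ILF → ILF → ILF

/-- `LJ c Δ C` : the intuitionistic sequent `Δ ⊢ C` (the right-hand side has
length at most one, encoded by `Option`) is provable in LJ, the restriction of
LK to intuitionistic sequents; the flag `c` permits Cut. -/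
inductive LJ : Bool → List ILF → Option ILF → Prop
  | xl : LJ c (Δ ++ A :: A' :: Δ') C → LJ c (Δ ++ A' :: A :: Δ') C
  | wl : LJ c Δ C → LJ c (Δ ++ [A]) C
  | wr : LJ c Δ none → LJ c Δ (some B)
  | cl : LJ c (Δ ++ [A, A]) C → LJ c (Δ ++ [A]) C
  | id : LJ c [A] (some A)
  | cut : LJ true Δ (some B) → LJ true (Δ' ++ [B]) C → LJ true (Δ ++ Δ') C
  | topL : LJ c Δ C → LJ c (Δ ++ [ILF.top]) C
  | topR : LJ c [] (some ILF.top)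
  | ffL : LJ c [ILF.ff] none
  | ffR : LJ c Δ none → LJ c Δ (some ILF.ff)
  | andL₁ : LJ c (Δ ++ [A₁]) C → LJ c (Δ ++ [ILF.and A₁ A₂]) C
  | andL₂ : LJ c (Δ ++ [A₂]) C → LJ c (Δ ++ [ILF.and A₁ A₂]) C
  | andR : LJ c Δ (some B₁) → LJ c Δ (some B₂) → LJ c Δ (some (ILF.and B₁ B₂))
  | orL : LJ c (Δ ++ [A₁]) C → LJ c (Δ ++ [A₂]) C → LJ c (Δ ++ [ILF.or A₁ A₂]) C
  | orR₁ : LJ c Δ (some B₁) → LJ c Δ (some (ILF.or B₁ B₂))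
  | orR₂ : LJ c Δ (some B₂) → LJ c Δ (some (ILF.or B₁ B₂))
  | impL : LJ c Δ (some A) → LJ c (Δ ++ [B]) C → LJ c (Δ ++ [ILF.imp A B]) C
  | impR : LJ c (Δ ++ [A]) (some B) → LJ c Δ (some (ILF.imp A B))

deriving instance DecidableEq for ILF

namespace CutElim

/-- Cut-free derivability. -/
abbrev D (Δ : List ILF) (C : Option ILF) : Prop := LJ false Δ C

theorem permD_aux {Δ Δ' : List ILF} (h : Δ.Perm Δ') :
    ∀ (Θ : List ILF) (C : Option ILF), D (Θ ++ Δ) C → D (Θ ++ Δ') C := by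
  induction h with
  | nil => intro Θ C h; exact h
  | cons a _ ih =>
      intro Θ C h
      have := ih (Θ ++ [a]) C (by simpa using h)
      simpa using this
  | swap x y l =>
      intro Θ C h
      exact LJ.xl h
  | trans _ _ ih1 ih2 =>
      intro Θ C h
      exact ih2 Θ C (ih1 Θ C h)

theorem permD {Δ Δ' : List ILF} (h : Δ.Perm Δ') {C : Option ILF}
    (hd : D Δ C) : D Δ' C := by
  have := permD_aux h [] C (by simpa using hd)
  simpa using this

theorem weakA : ∀ (Θ : List ILF) {Δ : List ILF} {C : Option ILF},
    D Δ C → D (Δ ++ Θ) C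
  | [], _, _, h => by simpa using h
  | t :: Θ, Δ, C, h => by
      have := weakA Θ (LJ.wl (A := t) h)
      simpa [List.append_assoc] using this

theorem contr_mem {a : ILF} {Δ : List ILF} {C : Option ILF}
    (ha : a ∈ Δ) (h : D (Δ ++ [a]) C) : D Δ C := by
  have pe : Δ.Perm (a :: Δ.erase a) := List.perm_cons_erase ha
  have p1 : (Δ ++ [a]).Perm (Δ.erase a ++ [a, a]) := by
    have := (pe.append_right [a]).trans
      ((List.perm_append_singleton a (Δ.erase a ++ [a])).symm)
    simpa [List.append_assoc] using this
  have h2 : D ((Δ.erase a) ++ [a]) C := LJ.cl (permD p1 h)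
  exact permD ((List.perm_append_singleton _ _).trans pe.symm) h2

theorem D_dedup : ∀ (Δ : List ILF) {Δ' : List ILF} {C : Option ILF},
    (∀ a ∈ Δ, a ∈ Δ') → D (Δ ++ Δ') C → D Δ' C
  | [], _, _, _, h => by simpa using h
  | a :: Δt, Δ', C, hs, h => by
      have h1 : D (a :: (Δt ++ Δ')) C := by simpa using h
      have h2 : D ((Δt ++ Δ') ++ [a]) C :=
        permD (List.perm_append_singleton a (Δt ++ Δ')).symm h1
      have h3 : D (Δt ++ Δ') C :=
        contr_mem (List.mem_append_right _ (hs a (List.mem_cons_self))) h2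
      exact D_dedup Δt (fun x hx => hs x (List.mem_cons_of_mem _ hx)) h3

/-- The central structural lemma: cut-free derivability is monotone w.r.t.
set-theoretic inclusion of contexts. -/
theorem D_mono {Δ Δ' : List ILF} {C : Option ILF} (h : D Δ C) (hs : Δ ⊆ Δ') :
    D Δ' C :=
  D_dedup Δ hs (weakA Δ' h)

theorem mem_id {A : ILF} {Γ : List ILF} (h : A ∈ Γ) : D Γ (some A) :=
  D_mono LJ.id (by intro x hx; simp at hx; simpa [hx])

theorem ffD {Γ : List ILF} {C : Option ILF} (h : ILF.ff ∈ Γ) : D Γ C := by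
  have base : D [ILF.ff] C := by
    cases C with
    | none => exact LJ.ffL
    | some B => exact LJ.wr LJ.ffL

  exact D_mono base (by intro x hx; simp at hx; simpa [hx])

theorem sub_absorb {X : ILF} {Γ : List ILF} (h : X ∈ Γ) : Γ ++ [X] ⊆ Γ := by
  intro a ha
  rcases List.mem_append.1 ha with h1 | h1
  · exact h1
  · simp at h1; simpa [h1]

/-- "Weak forcing" (continuation monad over cut-free derivability). -/
def Dw (P : List ILF → Prop) (Γ : List ILF) : Prop :=
  ∀ Γ', Γ ⊆ Γ' → ∀ C', (∀ Γ'', Γ' ⊆ Γ'' → P Γ'' → D Γ'' C') → D Γ' C'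

/-- Strong forcing in the universal Kripke model. -/
def F : ILF → List ILF → Prop
  | .var n, Γ => D Γ (some (.var n))
  | .top, _ => True
  | .ff, _ => False
  | .and A B, Γ => Dw (F A) Γ ∧ Dw (F B) Γ
  | .or A B, Γ => Dw (F A) Γ ∨ Dw (F B) Γ
  | .imp A B, Γ => ∀ Γ', Γ ⊆ Γ' → Dw (F A) Γ' → Dw (F B) Γ'

def Fopt : Option ILF → List ILF → Prop
  | none, _ => False
  | some B, Γ => F B Γ

theorem Dw_mono {P : List ILF → Prop} {Γ Γ' : List ILF}
    (h : Dw P Γ) (hs : Γ ⊆ Γ') : Dw P Γ' :=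
  fun Γ'' hs' C' k => h Γ'' (List.Subset.trans hs hs') C' k

theorem F_mono : ∀ (A : ILF) {Γ Γ' : List ILF}, F A Γ → Γ ⊆ Γ' → F A Γ'
  | .var n, _, _, h, hs => D_mono h hs
  | .top, _, _, _, _ => trivial
  | .ff, _, _, h, _ => h.elim
  | .and A B, _, _, h, hs => ⟨Dw_mono h.1 hs, Dw_mono h.2 hs⟩
  | .or A B, _, _, h, hs =>
      h.elim (fun w => Or.inl (Dw_mono w hs)) (fun w => Or.inr (Dw_mono w hs))
  | .imp A B, _, _, h, hs => fun Γ₂ hs₂ wA => h Γ₂ (List.Subset.trans hs hs₂) wA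

theorem F_to_Dw {A : ILF} {Γ : List ILF} (h : F A Γ) : Dw (F A) Γ :=
  fun Γ' hs C' k => k Γ' (List.Subset.refl _) (F_mono A h hs)

/-- Soundness of LJ (with cut) in the universal model. -/
theorem sound : ∀ {c : Bool} {Δ : List ILF} {C : Option ILF}, LJ c Δ C →
    ∀ Γ, (∀ A ∈ Δ, Dw (F A) Γ) → Dw (Fopt C) Γ := by
  intro c Δ C h
  induction h with
  | xl _ ih =>
      intro Γ hyp
      refine ih Γ ?_
      intro X hX
      apply hyp
      simp only [List.mem_append, List.mem_cons] at hX ⊢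
      tauto
  | wl _ ih =>
      intro Γ hyp
      exact ih Γ (fun X hX => hyp X (List.mem_append_left _ hX))
  | wr _ ih =>
      intro Γ hyp Γ' hs C' k
      exact ih Γ hyp Γ' hs C' (fun Γ'' _ f => f.elim)
  | cl _ ih =>
      intro Γ hyp
      refine ih Γ ?_
      intro X hX
      apply hyp
      simp only [List.mem_append, List.mem_cons] at hX ⊢
      tauto
  | id =>
      intro Γ hyp
      exact hyp _ (List.mem_singleton_self _)
  | cut _ _ ih1 ih2 =>
      intro Γ hyp Γ₁ hs C' k
      refine ih1 Γ (fun X hX => hyp X (List.mem_append_left _ hX)) Γ₁ hs C' ?_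
      intro Γ₂ hs₂ fB
      refine ih2 Γ₂ ?_ Γ₂ (List.Subset.refl _) C'
        (fun Γ₃ hs₃ f => k Γ₃ (List.Subset.trans hs₂ hs₃) f)
      intro X hX
      rcases List.mem_append.1 hX with h1 | h1
      · exact Dw_mono (hyp X (List.mem_append_right _ h1)) (List.Subset.trans hs hs₂)
      · simp at h1; subst h1; exact F_to_Dw fB
  | topL _ ih =>
      intro Γ hyp
      exact ih Γ (fun X hX => hyp X (List.mem_append_left _ hX))
  | topR =>
      intro Γ hyp Γ' hs C' k
      exact k Γ' (List.Subset.refl _) trivial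
  | ffL =>
      intro Γ hyp Γ' hs C' k
      refine hyp _ (List.mem_singleton_self _) Γ' hs C' ?_
      intro Γ'' _ f
      exact f.elim
  | ffR _ ih =>
      intro Γ hyp Γ' hs C' k
      exact ih Γ hyp Γ' hs C' (fun Γ'' _ f => f.elim)
  | andL₁ _ ih =>
      intro Γ hyp Γ' hs C' k
      refine hyp _ (List.mem_append_right _ (List.mem_singleton_self _)) Γ' hs C' ?_
      intro Γ'' hs'' fand
      simp only [F] at fand
      refine ih Γ'' ?_ Γ'' (List.Subset.refl _) C'
        (fun Γ₃ hs₃ f => k Γ₃ (List.Subset.trans hs'' hs₃) f)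
      intro X hX
      rcases List.mem_append.1 hX with h1 | h1
      · exact Dw_mono (hyp X (List.mem_append_left _ h1)) (List.Subset.trans hs hs'')
      · simp at h1; subst h1; exact fand.1
  | andL₂ _ ih =>
      intro Γ hyp Γ' hs C' k
      refine hyp _ (List.mem_append_right _ (List.mem_singleton_self _)) Γ' hs C' ?_
      intro Γ'' hs'' fand
      simp only [F] at fand
      refine ih Γ'' ?_ Γ'' (List.Subset.refl _) C'
        (fun Γ₃ hs₃ f => k Γ₃ (List.Subset.trans hs'' hs₃) f)
      intro X hX
      rcases List.mem_append.1 hX with h1 | h1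
      · exact Dw_mono (hyp X (List.mem_append_left _ h1)) (List.Subset.trans hs hs'')
      · simp at h1; subst h1; exact fand.2
  | andR _ _ ih1 ih2 =>
      intro Γ hyp Γ' hs C' k
      refine ih1 Γ hyp Γ' hs C' ?_
      intro Γ₂ hs₂ f1
      refine ih2 Γ₂ (fun X hX => Dw_mono (hyp X hX) (List.Subset.trans hs hs₂)) Γ₂
        (List.Subset.refl _) C' ?_
      intro Γ₃ hs₃ f2
      refine k Γ₃ (List.Subset.trans hs₂ hs₃) ?_
      show F _ Γ₃
      simp only [F]
      exact ⟨Dw_mono (F_to_Dw f1) hs₃, F_to_Dw f2⟩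
  | orL _ _ ih1 ih2 =>
      intro Γ hyp Γ' hs C' k
      refine hyp _ (List.mem_append_right _ (List.mem_singleton_self _)) Γ' hs C' ?_
      intro Γ'' hs'' forr
      simp only [F] at forr
      have hyps : ∀ X ∈ _, Dw (F X) Γ'' := fun X hX =>
        Dw_mono (hyp X (List.mem_append_left _ hX)) (List.Subset.trans hs hs'')
      rcases forr with h1 | h1
      · refine ih1 Γ'' ?_ Γ'' (List.Subset.refl _) C'
          (fun Γ₃ hs₃ f => k Γ₃ (List.Subset.trans hs'' hs₃) f)
        intro X hX
        rcases List.mem_append.1 hX with h2 | h2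
        · exact hyps X h2
        · simp at h2; subst h2; exact h1
      · refine ih2 Γ'' ?_ Γ'' (List.Subset.refl _) C'
          (fun Γ₃ hs₃ f => k Γ₃ (List.Subset.trans hs'' hs₃) f)
        intro X hX
        rcases List.mem_append.1 hX with h2 | h2
        · exact hyps X h2
        · simp at h2; subst h2; exact h1
  | orR₁ _ ih =>
      intro Γ hyp Γ' hs C' k
      refine ih Γ hyp Γ' hs C' ?_
      intro Γ₂ hs₂ f1
      refine k Γ₂ hs₂ ?_
      show F _ Γ₂
      simp only [F]
      exact Or.inl (F_to_Dw f1)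
  | orR₂ _ ih =>
      intro Γ hyp Γ' hs C' k
      refine ih Γ hyp Γ' hs C' ?_
      intro Γ₂ hs₂ f1
      refine k Γ₂ hs₂ ?_
      show F _ Γ₂
      simp only [F]
      exact Or.inr (F_to_Dw f1)
  | impL _ _ ih1 ih2 =>
      intro Γ hyp Γ₁ hs C' k
      refine hyp _ (List.mem_append_right _ (List.mem_singleton_self _)) Γ₁ hs C' ?_
      intro Γ₂ hs₂ fimp
      simp only [F] at fimp
      have wA := ih1 Γ₂
        (fun X hX => Dw_mono (hyp X (List.mem_append_left _ hX)) (List.Subset.trans hs hs₂))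
      have wB : Dw (F _) Γ₂ := fimp Γ₂ (List.Subset.refl _) wA
      refine wB Γ₂ (List.Subset.refl _) C' ?_
      intro Γ₃ hs₃ fB
      refine ih2 Γ₃ ?_ Γ₃ (List.Subset.refl _) C'
        (fun Γ₄ hs₄ f => k Γ₄ (List.Subset.trans hs₂ (List.Subset.trans hs₃ hs₄)) f)
      intro X hX
      rcases List.mem_append.1 hX with h1 | h1
      · exact Dw_mono (hyp X (List.mem_append_left _ h1))
          (List.Subset.trans hs (List.Subset.trans hs₂ hs₃))
      · simp at h1; subst h1; exact F_to_Dw fB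
  | impR _ ih =>
      intro Γ hyp Γ₁ hs C' k
      refine k Γ₁ (List.Subset.refl _) ?_
      show F _ Γ₁
      simp only [F]
      intro Γ₂ hs₂ wA
      refine ih Γ₂ ?_
      intro X hX
      rcases List.mem_append.1 hX with h1 | h1
      · exact Dw_mono (hyp X h1) (List.Subset.trans hs hs₂)
      · simp at h1; subst h1; exact wA

/-- Reify (strong forcing gives cut-free derivations) and reflect
(hypotheses are weakly forced), proved mutually by induction on the formula. -/
theorem rr : ∀ A : ILF,
    (∀ Γ, F A Γ → D Γ (some A)) ∧ (∀ Γ, A ∈ Γ → Dw (F A) Γ) := by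
  intro A
  induction A with
  | var n =>
      constructor
      · intro Γ f; exact f
      · intro Γ hm Γ' hs C' k
        exact k Γ' (List.Subset.refl _) (mem_id (hs hm))
  | top =>
      constructor
      · intro Γ _; exact D_mono LJ.topR (by intro x hx; simp at hx)
      · intro Γ _ Γ' _ C' k; exact k Γ' (List.Subset.refl _) trivial
  | ff =>
      constructor
      · intro Γ f; exact f.elim
      · intro Γ hm Γ' hs C' k; exact ffD (hs hm)
  | and A B ihA ihB =>
      obtain ⟨rA, fA⟩ := ihA
      obtain ⟨rB, fB⟩ := ihB
      constructor
      · intro Γ f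
        simp only [F] at f
        have dA : D Γ (some A) := f.1 Γ (List.Subset.refl _) (some A)
          (fun Γ' _ g => rA Γ' g)
        have dB : D Γ (some B) := f.2 Γ (List.Subset.refl _) (some B)
          (fun Γ' _ g => rB Γ' g)
        exact LJ.andR dA dB
      · intro Γ hm Γ₁ hs C' k
        refine k Γ₁ (List.Subset.refl _) ?_
        show F _ Γ₁
        simp only [F]
        constructor
        · intro Γ₂ hs₂ C₂ k₂
          have hd : D (Γ₂ ++ [A]) C₂ :=
            fA (Γ₂ ++ [A]) (by simp) (Γ₂ ++ [A]) (List.Subset.refl _) C₂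
              (fun Γ₃ hs₃ g => k₂ Γ₃ (List.Subset.trans (List.subset_append_left _ _) hs₃) g)
          exact D_mono (LJ.andL₁ hd) (sub_absorb (hs₂ (hs hm)))
        · intro Γ₂ hs₂ C₂ k₂
          have hd : D (Γ₂ ++ [B]) C₂ :=
            fB (Γ₂ ++ [B]) (by simp) (Γ₂ ++ [B]) (List.Subset.refl _) C₂
              (fun Γ₃ hs₃ g => k₂ Γ₃ (List.Subset.trans (List.subset_append_left _ _) hs₃) g)
          exact D_mono (LJ.andL₂ hd) (sub_absorb (hs₂ (hs hm)))
  | or A B ihA ihB =>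
      obtain ⟨rA, fA⟩ := ihA
      obtain ⟨rB, fB⟩ := ihB
      constructor
      · intro Γ f
        simp only [F] at f
        rcases f with w | w
        · exact LJ.orR₁ (w Γ (List.Subset.refl _) (some A) (fun Γ' _ g => rA Γ' g))
        · exact LJ.orR₂ (w Γ (List.Subset.refl _) (some B) (fun Γ' _ g => rB Γ' g))
      · intro Γ hm Γ₁ hs C' k
        have dA : D (Γ₁ ++ [A]) C' :=
          fA (Γ₁ ++ [A]) (by simp) (Γ₁ ++ [A]) (List.Subset.refl _) C'
            (fun Γ₃ hs₃ g => k Γ₃ (List.Subset.trans (List.subset_append_left _ _) hs₃)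
              (by show F _ Γ₃; simp only [F]; exact Or.inl (F_to_Dw g)))
        have dB : D (Γ₁ ++ [B]) C' :=
          fB (Γ₁ ++ [B]) (by simp) (Γ₁ ++ [B]) (List.Subset.refl _) C'
            (fun Γ₃ hs₃ g => k Γ₃ (List.Subset.trans (List.subset_append_left _ _) hs₃)
              (by show F _ Γ₃; simp only [F]; exact Or.inr (F_to_Dw g)))
        exact D_mono (LJ.orL dA dB) (sub_absorb (hs hm))
  | imp A B ihA ihB =>
      obtain ⟨rA, fA⟩ := ihA
      obtain ⟨rB, fB⟩ := ihB
      constructor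
      · intro Γ f
        simp only [F] at f
        have wA : Dw (F A) (Γ ++ [A]) := fA _ (by simp)
        have wB : Dw (F B) (Γ ++ [A]) :=
          f (Γ ++ [A]) (List.subset_append_left _ _) wA
        have dB : D (Γ ++ [A]) (some B) :=
          wB _ (List.Subset.refl _) (some B) (fun Γ' _ g => rB Γ' g)
        exact LJ.impR dB
      · intro Γ hm Γ₁ hs C₁ k
        refine k Γ₁ (List.Subset.refl _) ?_
        show F _ Γ₁
        simp only [F]
        intro Γ₂ hs₂ wA Γ₃ hs₃ C₃ k₃
        have dA : D Γ₃ (some A) :=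
          (Dw_mono wA hs₃) Γ₃ (List.Subset.refl _) (some A) (fun Γ' _ g => rA Γ' g)
        have dB : D (Γ₃ ++ [B]) C₃ :=
          fB (Γ₃ ++ [B]) (by simp) (Γ₃ ++ [B]) (List.Subset.refl _) C₃
            (fun Γ₄ hs₄ g => k₃ Γ₄ (List.Subset.trans (List.subset_append_left _ _) hs₄) g)
        exact D_mono (LJ.impL dA dB) (sub_absorb (hs₃ (hs₂ (hs hm))))

end CutElim

/-- Cut-elimination for LJ: every sequent `Δ ⊢ Γ` (with `|Γ| ≤ 1`, encoded by
an `Option` on the right) provable in LJ has a cut-free proof in LJ. -/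
theorem lj_cut_elimination (Δ : List ILF) (C : Option ILF) :
    LJ true Δ C → LJ false Δ C := by
  intro h
  have s := CutElim.sound h Δ (fun A hA => (CutElim.rr A).2 Δ hA)
  refine s Δ (List.Subset.refl _) C ?_
  intro Γ'' hs f
  cases C with
  | none => exact f.elim
  | some B => exact CutElim.D_mono ((CutElim.rr B).1 Γ'' f) (List.Subset.refl _)
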